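/- Let α ∈ (0,1], let V be an open set in ℝ², and let ψ ∈ C¹(V) with ψ_x, ψ_y ∈ C^{0,α}_loc(V). Let φ ∈ C¹_0(V) with K = supp φ, set ε₀ = dist(K, ℝ² ∖ V)/2 and K₀ = {x ∈ ℝ² : dist(x,K) ≤ ε₀}. Then there exists a constant C, depending on φ but not on ε, such that for all ε ∈ (0, ε₀): |∫_K R^ε(ψ_x, ψ_y) · ∂_x(ψ_x^ε φ) dx dy| ≤ C ( ε^{2α} ‖ψ_x‖²_{C^{0,α}(K₀)} ‖ψ_y‖_{C^{0,α}(K₀)} + ε^{3α−1} ‖ψ_x‖³_{C^{0,α}(K₀)} ). In particular, if α > 1/3 this integral tends to 0 as ε → 0. -/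

import Mathlib

open MeasureTheory Set

/-- Partial derivative in direction `k` on the Euclidean plane. -/
noncomputable def pd (k : Fin 2) (f : EuclideanSpace ℝ (Fin 2) → ℝ)
    (z : EuclideanSpace ℝ (Fin 2)) : ℝ :=
  fderiv ℝ f z (EuclideanSpace.single k 1)

/-- Mollification `f^ε(x) = ∫ ρ(z) f(x - εz) dz`. -/
noncomputable def mollify (ρ : EuclideanSpace ℝ (Fin 2) → ℝ) (ε : ℝ)
    (f : EuclideanSpace ℝ (Fin 2) → ℝ) (x : EuclideanSpace ℝ (Fin 2)) : ℝ :=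
  ∫ z, ρ z * f (x - ε • z)

/-- `r^ε(f,g)(x) = ∫ ρ(z) (f(x-εz) - f(x)) (g(x-εz) - g(x)) dz`. -/
noncomputable def rEps (ρ : EuclideanSpace ℝ (Fin 2) → ℝ) (ε : ℝ)
    (f g : EuclideanSpace ℝ (Fin 2) → ℝ) (x : EuclideanSpace ℝ (Fin 2)) : ℝ :=
  ∫ z, ρ z * ((f (x - ε • z) - f x) * (g (x - ε • z) - g x))

/-- `R^ε(f,g) = r^ε(f,g) - (f - f^ε)(g - g^ε)`. -/
noncomputable def REps (ρ : EuclideanSpace ℝ (Fin 2) → ℝ) (ε : ℝ)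
    (f g : EuclideanSpace ℝ (Fin 2) → ℝ) (x : EuclideanSpace ℝ (Fin 2)) : ℝ :=
  rEps ρ ε f g x - (f x - mollify ρ ε f x) * (g x - mollify ρ ε g x)

/-- The Hölder norm `‖f‖_{C^{0,α}(S)}`. -/
noncomputable def holderNorm (α : ℝ) (f : EuclideanSpace ℝ (Fin 2) → ℝ)
    (S : Set (EuclideanSpace ℝ (Fin 2))) : ℝ :=
  sSup ((fun x => |f x|) '' S) +
    sSup {r : ℝ | ∃ x ∈ S, ∃ y ∈ S, x ≠ y ∧ r = |f x - f y| / ‖x - y‖ ^ α}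

/-- `f ∈ C^{0,α}_loc(V)`. -/
def MemHolderLoc (α : ℝ) (f : EuclideanSpace ℝ (Fin 2) → ℝ)
    (V : Set (EuclideanSpace ℝ (Fin 2))) : Prop :=
  ∀ K : Set (EuclideanSpace ℝ (Fin 2)), K ⊆ V → IsCompact K →
    BddAbove ((fun x => |f x|) '' K) ∧
      BddAbove {r : ℝ | ∃ x ∈ K, ∃ y ∈ K, x ≠ y ∧ r = |f x - f y| / ‖x - y‖ ^ α}

open scoped Convolution

local notation "E2" => EuclideanSpace ℝ (Fin 2)

lemma holder_facts (α : ℝ) (f : E2 → ℝ) (S : Set E2)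
    (hb1 : BddAbove ((fun x => |f x|) '' S))
    (hb2 : BddAbove {r : ℝ | ∃ x ∈ S, ∃ y ∈ S, x ≠ y ∧ r = |f x - f y| / ‖x - y‖ ^ α}) :
    (∀ x ∈ S, |f x| ≤ holderNorm α f S) ∧
    (∀ x ∈ S, ∀ y ∈ S, |f x - f y| ≤ holderNorm α f S * ‖x - y‖ ^ α) ∧
    (S.Nonempty → 0 ≤ holderNorm α f S) := by
  set T := {r : ℝ | ∃ x ∈ S, ∃ y ∈ S, x ≠ y ∧ r = |f x - f y| / ‖x - y‖ ^ α} with hT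
  have hB0 : 0 ≤ sSup T := by
    rcases T.eq_empty_or_nonempty with h | ⟨r, hr⟩
    · simp [h, Real.sSup_empty]
    · have hr0 : 0 ≤ r := by
        obtain ⟨x, hx, y, hy, hxy, rfl⟩ := hr
        positivity
      exact hr0.trans (le_csSup hb2 hr)
  have hA : ∀ x ∈ S, |f x| ≤ sSup ((fun x => |f x|) '' S) := fun x hx =>
    le_csSup hb1 ⟨x, hx, rfl⟩
  have h1 : ∀ x ∈ S, |f x| ≤ holderNorm α f S := by
    intro x hx
    have := hA x hx
    unfold holderNorm
    rw [← hT]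
    linarith
  refine ⟨h1, fun x hx y hy => ?_, fun ⟨x, hx⟩ => (abs_nonneg (f x)).trans (h1 x hx)⟩
  have hA0 : 0 ≤ sSup ((fun x => |f x|) '' S) := (abs_nonneg (f x)).trans (hA x hx)
  rcases eq_or_ne x y with rfl | hxy
  · simp only [sub_self, abs_zero]
    have : (0:ℝ) ≤ ‖x - x‖ ^ α := Real.rpow_nonneg (norm_nonneg _) _
    have h2 : 0 ≤ holderNorm α f S := by unfold holderNorm; rw [← hT]; linarith
    positivity
  · have hmem : |f x - f y| / ‖x - y‖ ^ α ∈ T := ⟨x, hx, y, hy, hxy, rfl⟩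
    have h2 : |f x - f y| / ‖x - y‖ ^ α ≤ sSup T := le_csSup hb2 hmem
    have hpos : (0:ℝ) < ‖x - y‖ ^ α :=
      Real.rpow_pos_of_pos (norm_pos_iff.2 (sub_ne_zero.2 hxy)) α
    have h3 : |f x - f y| ≤ sSup T * ‖x - y‖ ^ α := (div_le_iff₀ hpos).1 h2
    have h4 : sSup T * ‖x - y‖ ^ α ≤ holderNorm α f S * ‖x - y‖ ^ α := by
      unfold holderNorm; rw [← hT]; nlinarith [hpos.le]
    linarith

set_option maxHeartbeats 4000000 in
theorem keyEstimate (α : ℝ) (hα0 : 0 < α)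
    (ρ : E2 → ℝ)
    (hρ_smooth : ContDiff ℝ (⊤ : ℕ∞) ρ) (hρ_nonneg : ∀ x, 0 ≤ ρ x)
    (hρ_supp : tsupport ρ ⊆ Metric.ball 0 1) (hρ_int : (∫ x, ρ x) = 1)
    (V : Set E2) (ψ : E2 → ℝ)
    (hψx : MemHolderLoc α (pd 0 ψ) V) (hψy : MemHolderLoc α (pd 1 ψ) V)
    (φ : E2 → ℝ) (hφ : ContDiff ℝ 1 φ) (hφc : HasCompactSupport φ)
    (hKne : (tsupport φ).Nonempty) (δ : ℝ) (hδ : 0 < δ)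
    (hsub : {y : E2 | Metric.infDist y (tsupport φ) ≤ δ} ⊆ V) :
    ∃ D₁ D₂ : ℝ, 0 ≤ D₁ ∧ 0 ≤ D₂ ∧
      0 ≤ holderNorm α (pd 0 ψ) {y : E2 | Metric.infDist y (tsupport φ) ≤ δ} ∧
      0 ≤ holderNorm α (pd 1 ψ) {y : E2 | Metric.infDist y (tsupport φ) ≤ δ} ∧
      ∀ ε : ℝ, 0 < ε → ε < δ →
      |∫ z in tsupport φ, REps ρ ε (pd 0 ψ) (pd 1 ψ) z *
          pd 0 (fun w => mollify ρ ε (pd 0 ψ) w * φ w) z| ≤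
        D₁ * (ε ^ (2*α) *
            (holderNorm α (pd 0 ψ) {y : E2 | Metric.infDist y (tsupport φ) ≤ δ})^2 *
            holderNorm α (pd 1 ψ) {y : E2 | Metric.infDist y (tsupport φ) ≤ δ})
        + D₂ * (ε ^ (3*α-1) *
            (holderNorm α (pd 0 ψ) {y : E2 | Metric.infDist y (tsupport φ) ≤ δ})^2 *
            holderNorm α (pd 1 ψ) {y : E2 | Metric.infDist y (tsupport φ) ≤ δ}) := by
  classical
  set K : Set E2 := tsupport φ with hKdef
  have hKc : IsCompact K := hφc
  have hKm : MeasurableSet K := (isClosed_tsupport φ).measurableSet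
  set K₀ : Set E2 := {y : E2 | Metric.infDist y K ≤ δ} with hK₀def
  have hK₀cl : IsClosed K₀ := isClosed_le (Metric.continuous_infDist_pt K) continuous_const
  have hK₀m : MeasurableSet K₀ := hK₀cl.measurableSet
  have hK₀ : ∀ y : E2, Metric.infDist y K ≤ δ → y ∈ K₀ := fun y hy => hy
  have hK₀c : IsCompact K₀ := by
    obtain ⟨k₀, hk₀⟩ := hKne
    obtain ⟨R, hR⟩ := hKc.isBounded.subset_closedBall k₀
    apply (isCompact_closedBall k₀ (δ + R)).of_isClosed_subset hK₀cl
    intro y hy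
    obtain ⟨z, hzK, hzd⟩ := hKc.exists_infDist_eq_dist ⟨k₀, hk₀⟩ y
    have h1 : dist y z ≤ δ := by rw [← hzd]; exact hy
    have h2 : dist z k₀ ≤ R := hR hzK
    have := dist_triangle y z k₀
    simp only [Metric.mem_closedBall]
    linarith
  have hKK₀ : K ⊆ K₀ := by
    intro x hx
    show Metric.infDist x K ≤ δ
    rw [Metric.infDist_zero_of_mem hx]
    exact hδ.le
  set f : E2 → ℝ := pd 0 ψ with hfdef
  set g : E2 → ℝ := pd 1 ψ with hgdef
  set N : ℝ := holderNorm α f K₀ with hNdef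
  set M : ℝ := holderNorm α g K₀ with hMdef
  obtain ⟨hbf1, hbf2⟩ := hψx K₀ hsub hK₀c
  obtain ⟨hbg1, hbg2⟩ := hψy K₀ hsub hK₀c
  obtain ⟨hN1, hN2, hN0'⟩ := holder_facts α f K₀ hbf1 hbf2
  obtain ⟨hM1, hM2, hM0'⟩ := holder_facts α g K₀ hbg1 hbg2
  have hK₀ne : K₀.Nonempty := hKne.mono hKK₀
  have hN0 : 0 ≤ N := hN0' hK₀ne
  have hM0 : 0 ≤ M := hM0' hK₀ne
  have hfm : Measurable f := by
    have : f = fun z => fderiv ℝ ψ z (EuclideanSpace.single 0 1) := rfl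
    rw [this]
    exact measurable_fderiv_apply_const ℝ ψ (EuclideanSpace.single 0 1)
  have hgm : Measurable g := by
    have : g = fun z => fderiv ℝ ψ z (EuclideanSpace.single 1 1) := rfl
    rw [this]
    exact measurable_fderiv_apply_const ℝ ψ (EuclideanSpace.single 1 1)
  have hρc : HasCompactSupport ρ :=
    HasCompactSupport.of_support_subset_isCompact (isCompact_closedBall (0:E2) 1)
      ((subset_tsupport ρ).trans (hρ_supp.trans Metric.ball_subset_closedBall))
  have hρcont : Continuous ρ := hρ_smooth.continuous
  have hρint : Integrable ρ := hρcont.integrable_of_hasCompactSupport hρc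
  have hρd : Differentiable ℝ ρ := hρ_smooth.differentiable (by norm_num)
  set v : E2 := EuclideanSpace.single 0 1 with hv
  set Cρ : ℝ := ∫ z, |fderiv ℝ ρ z v| with hCρ
  have hCρ0 : 0 ≤ Cρ := integral_nonneg fun z => abs_nonneg _
  obtain ⟨Cφ, hCφ⟩ := hKc.exists_bound_of_continuousOn hφ.continuous.continuousOn
  obtain ⟨Cφ', hCφ'⟩ := hKc.exists_bound_of_continuousOn
    ((hφ.continuous_fderiv one_ne_zero).clm_apply (continuous_const (y := v))).continuousOn
  have hCφ0 : 0 ≤ Cφ := (norm_nonneg _).trans (hCφ _ hKne.choose_spec)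
  have hCφ'0 : 0 ≤ Cφ' := (norm_nonneg _).trans (hCφ' _ hKne.choose_spec)
  refine ⟨2*Cφ'*(volume K).toReal, 2*Cρ*Cφ*(volume K).toReal, by positivity, by positivity,
    hN0, hM0, ?_⟩
  intro ε hε hεδ
  -- the rescaled mollifier
  set ρε : E2 → ℝ := fun y => (ε^2)⁻¹ * ρ (ε⁻¹ • y) with hρε
  have hρεC : ContDiff ℝ 1 ρε :=
    contDiff_const.mul ((hρ_smooth.of_le (by norm_num)).comp (contDiff_id.const_smul ε⁻¹))
  have hρεc : HasCompactSupport ρε := by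
    apply HasCompactSupport.of_support_subset_isCompact (isCompact_closedBall (0:E2) ε)
    intro y hy
    have h1 : ρ (ε⁻¹ • y) ≠ 0 := by
      intro h; apply hy; simp [hρε, h]
    have h2 : ε⁻¹ • y ∈ Metric.ball (0:E2) 1 :=
      hρ_supp (subset_tsupport ρ h1)
    simp only [Metric.mem_ball, dist_zero_right, norm_smul, norm_inv,
      Real.norm_eq_abs, abs_of_pos hε] at h2
    simp only [Metric.mem_closedBall, dist_zero_right]
    calc ‖y‖ = ε * (ε⁻¹ * ‖y‖) := by field_simp
    _ ≤ ε * 1 := by nlinarith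
    _ = ε := mul_one ε
  have hρεd : Differentiable ℝ ρε := hρεC.differentiable one_ne_zero
  have hρεint : Integrable ρε := hρεC.continuous.integrable_of_hasCompactSupport hρεc
  -- fderiv of ρε
  have hfd : ∀ s : E2, HasFDerivAt ρε
      ((ε^2)⁻¹ • ((fderiv ℝ ρ (ε⁻¹ • s)).comp (ε⁻¹ • ContinuousLinearMap.id ℝ E2))) s := by
    intro s
    have hA : HasFDerivAt (fun y : E2 => ε⁻¹ • y) (ε⁻¹ • ContinuousLinearMap.id ℝ E2) s := by
      exact (hasFDerivAt_id s).const_smul ε⁻¹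
    have := ((hρd (ε⁻¹ • s)).hasFDerivAt.comp s hA).const_mul ((ε^2)⁻¹)
    simpa [hρε, smul_smul] using this
  have hDρεv : ∀ s : E2, fderiv ℝ ρε s v = (ε^2)⁻¹ * (ε⁻¹ * fderiv ℝ ρ (ε⁻¹ • s) v) := by
    intro s
    rw [(hfd s).fderiv]
    simp [ContinuousLinearMap.smul_apply, ContinuousLinearMap.comp_apply,
      (fderiv ℝ ρ (ε⁻¹ • s)).map_smul, smul_eq_mul]
  have hDρεcont : Continuous (fderiv ℝ ρε) := hρεC.continuous_fderiv one_ne_zero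
  have hDρεc : HasCompactSupport (fderiv ℝ ρε) := hρεc.fderiv ℝ
  have hρεsupp : tsupport ρε ⊆ Metric.closedBall 0 ε := by
    apply closure_minimal ?_ Metric.isClosed_closedBall
    intro y hy
    have h1 : ρ (ε⁻¹ • y) ≠ 0 := by
      intro h; apply hy; simp [hρε, h]
    have h2 : ε⁻¹ • y ∈ Metric.ball (0:E2) 1 := hρ_supp (subset_tsupport ρ h1)
    simp only [Metric.mem_ball, dist_zero_right, norm_smul, norm_inv,
      Real.norm_eq_abs, abs_of_pos hε] at h2
    simp only [Metric.mem_closedBall, dist_zero_right]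
    calc ‖y‖ = ε * (ε⁻¹ * ‖y‖) := by field_simp
    _ ≤ ε * 1 := by nlinarith
    _ = ε := mul_one ε
  have hDρεsupp : tsupport (fderiv ℝ ρε) ⊆ Metric.closedBall 0 ε :=
    (tsupport_fderiv_subset ℝ).trans hρεsupp
  -- mean zero of the derivative of the rescaled mollifier
  have hDρεv_int : Integrable (fun s => fderiv ℝ ρε s v) :=
    (hDρεcont.clm_apply continuous_const).integrable_of_hasCompactSupport
      (hρεc.fderiv_apply ℝ v)
  have hmean : (∫ s, fderiv ℝ ρε s v) = 0 := by
    have h := integral_mul_fderiv_eq_neg_fderiv_mul_of_integrable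
      (f := fun _ : E2 => (1:ℝ)) (g := ρε) (v := v) (μ := volume) ?_ ?_ ?_ ?_ ?_
    · simpa using h
    · simpa [fderiv_const] using (integrable_zero E2 ℝ volume)
    · simpa using hDρεv_int
    · simpa using hρεint
    · exact fun x _ => differentiableAt_const (1:ℝ)
    · exact fun x _ => hρεd x
  -- truncation of f
  set ft : E2 → ℝ := K₀.indicator f with hft
  have hftm : AEStronglyMeasurable ft volume := (hfm.indicator hK₀m).aestronglyMeasurable
  have hftb : ∀ t, |ft t| ≤ N := by
    intro t; by_cases h : t ∈ K₀
    · simpa [hft, Set.indicator_of_mem h] using hN1 t h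
    · simpa [hft, Set.indicator_of_notMem h] using hN0
  have hftint : Integrable ft := by
    have h1 : Integrable (K₀.indicator (fun _ : E2 => N)) :=
      (integrable_indicator_iff hK₀m).2 (integrableOn_const hK₀c.measure_lt_top.ne enorm_ne_top)
    refine h1.mono' hftm ?_
    filter_upwards with t
    by_cases h : t ∈ K₀
    · simpa [hft, Set.indicator_of_mem h] using hN1 t h
    · simp [hft, Set.indicator_of_notMem h]
  have hftloc : LocallyIntegrable ft volume := hftint.locallyIntegrable
  -- the convolution and its derivative
  set L := ContinuousLinearMap.mul ℝ ℝ with hL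
  set molli : E2 → ℝ := ft ⋆[L, volume] ρε with hmolli
  have hdiff : ∀ x : E2, HasFDerivAt molli ((ft ⋆[L.precompR E2, volume] fderiv ℝ ρε) x) x :=
    fun x => hρεc.hasFDerivAt_convolution_right L hftloc hρεC x
  have happly : ∀ x : E2, (ft ⋆[L.precompR E2, volume] fderiv ℝ ρε) x v
      = ∫ t, ft t * fderiv ℝ ρε (x - t) v := by
    intro x
    rw [convolution_precompR_apply L hftloc hDρεc hDρεcont]
    simp [convolution_def, hL, ContinuousLinearMap.mul_apply']
  -- change of variables
  have hCOV : ∀ H : E2 → ℝ, (∫ t, H t) = ε^2 * ∫ z, H (ε • z) := by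
    intro H
    have h1 : (∫ x, H (ε • x)) = |(ε ^ (2:ℕ))⁻¹| • ∫ x, H x := by
      simpa [finrank_euclideanSpace] using Measure.integral_comp_smul (μ := volume) H ε
    rw [h1, abs_of_pos (by positivity), smul_eq_mul]
    field_simp
  have hSUB : ∀ (H : E2 → ℝ) (x : E2), (∫ t, H (x - t)) = ∫ t, H t := fun H x =>
    integral_sub_left_eq_self H volume x
  -- membership facts
  have hmem : ∀ x : E2, Metric.infDist x K ≤ δ - ε → ∀ z : E2, ρ z ≠ 0 → x - ε • z ∈ K₀ := by
    intro x hx z hz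
    have h3 : ‖z‖ < 1 := by
      simpa using hρ_supp (subset_tsupport ρ hz)
    apply hK₀
    have h4 : Metric.infDist (x - ε • z) K ≤ Metric.infDist x K + dist (x - ε • z) x :=
      Metric.infDist_le_infDist_add_dist
    have h5 : dist (x - ε • z) x ≤ ε := by
      rw [dist_eq_norm]
      have : x - ε • z - x = -(ε • z) := by abel
      rw [this, norm_neg, norm_smul, Real.norm_eq_abs, abs_of_pos hε]
      exact mul_le_of_le_one_right hε.le h3.le
    linarith
  -- molli agrees with mollify near K
  have hmolli_eq : ∀ x : E2, Metric.infDist x K < δ - ε → molli x = mollify ρ ε f x := by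
    intro x hx
    have e1 : molli x = ∫ t, ft (x - t) * ρε t := by
      rw [hmolli, convolution_def]
      simp only [hL, ContinuousLinearMap.mul_apply']
      have h0 := hSUB (fun s => ft (x - s) * ρε s) x
      simp only [sub_sub_cancel] at h0
      rw [← h0]
    have e2 : (∫ t, ft (x - t) * ρε t) = ∫ z, ρ z * ft (x - ε • z) := by
      rw [hCOV (fun t => ft (x - t) * ρε t)]
      have hzz : ∀ z : E2, ft (x - ε • z) * ρε (ε • z) = (ε^2)⁻¹ * (ρ z * ft (x - ε • z)) := by
        intro z
        simp only [hρε, smul_smul, inv_mul_cancel₀ hε.ne', one_smul]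
        ring
      simp only [hzz]
      rw [integral_const_mul]
      field_simp
    have e3 : (∫ z, ρ z * ft (x - ε • z)) = mollify ρ ε f x := by
      unfold mollify
      congr 1; funext z
      by_cases hz : ρ z = 0
      · simp [hz]
      · rw [hft, Set.indicator_of_mem (hmem x (by linarith) z hz)]
    rw [e1, e2, e3]
  -- bound on the derivative of molli on K
  set Cρ : ℝ := ∫ z, |fderiv ℝ ρ z v| with hCρ
  have hCρ0 : 0 ≤ Cρ := integral_nonneg fun z => abs_nonneg _
  have hDbound : ∀ x ∈ K,
      |(ft ⋆[L.precompR E2, volume] fderiv ℝ ρε) x v| ≤ Cρ * N * ε^α * ε⁻¹ := by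
    intro x hxK
    set q : E2 → ℝ := fun t => fderiv ℝ ρε (x - t) v with hq
    have hqcont : Continuous q :=
      (hDρεcont.comp (continuous_const.sub continuous_id)).clm_apply continuous_const
    have hqcs : HasCompactSupport q := by
      have h1 : HasCompactSupport (fun t => fderiv ℝ ρε (x - t)) :=
        hDρεc.comp_homeomorph (Homeomorph.subLeft x)
      exact h1.comp_left (g := fun L : E2 →L[ℝ] ℝ => L v) rfl
    have hqint : Integrable q := hqcont.integrable_of_hasCompactSupport hqcs
    have hq0 : (∫ t, q t) = 0 := by
      rw [hq]
      rw [hSUB (fun s => fderiv ℝ ρε s v) x]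
      exact hmean
    have h2 : Integrable (fun t => (ft t - f x) * q t) := by
      apply Integrable.mono' (hqint.norm.const_mul (N + |f x|))
        ((hftm.sub aestronglyMeasurable_const).mul hqcont.aestronglyMeasurable)
      filter_upwards with t
      have hb1 : |ft t - f x| ≤ N + |f x| := by
        have h9 := hftb t
        have h8 := abs_sub (ft t) (f x)
        linarith
      calc ‖(ft t - f x) * q t‖ = |ft t - f x| * |q t| := by
            rw [Real.norm_eq_abs, abs_mul]
        _ ≤ (N + |f x|) * ‖q t‖ := by
            rw [Real.norm_eq_abs]
            exact mul_le_mul_of_nonneg_right hb1 (abs_nonneg _)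
    have hsplit : (∫ t, ft t * q t) = ∫ t, (ft t - f x) * q t := by
      have h3 : Integrable (fun t => f x * q t) := hqint.const_mul _
      have h4 : (fun t => ft t * q t) = fun t => (ft t - f x) * q t + f x * q t := by
        funext t; ring
      rw [h4, integral_add h2 h3, integral_const_mul, hq0, mul_zero, add_zero]
    have hpt : ∀ t, ‖(ft t - f x) * q t‖ ≤ (N * ε^α) * |q t| := by
      intro t
      by_cases hqt : q t = 0
      · simp [hqt]
      · have hne : fderiv ℝ ρε (x - t) ≠ 0 := by
          intro h; exact hqt (by simp [hq, h])
        have hxt : x - t ∈ tsupport (fderiv ℝ ρε) := subset_tsupport _ hne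
        have hdist : ‖x - t‖ ≤ ε := by
          simpa [dist_eq_norm] using hDρεsupp hxt
        have htK₀ : t ∈ K₀ := by
          apply hK₀
          have : dist t x ≤ ε := by rw [dist_eq_norm, norm_sub_rev]; exact hdist
          linarith [Metric.infDist_le_dist_of_mem (s := K) (x := t) (y := x) hxK]
        have hft_t : ft t = f t := Set.indicator_of_mem htK₀ f
        have h5 : |f t - f x| ≤ N * ‖t - x‖^α := hN2 t htK₀ x (hKK₀ hxK)
        have h6 : ‖t - x‖^α ≤ ε^α :=
          Real.rpow_le_rpow (norm_nonneg _) (by rw [norm_sub_rev]; exact hdist) hα0.le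
        have h7 : N * ‖t - x‖^α ≤ N * ε^α := mul_le_mul_of_nonneg_left h6 hN0
        calc ‖(ft t - f x) * q t‖ = |f t - f x| * |q t| := by
              rw [Real.norm_eq_abs, hft_t, abs_mul]
          _ ≤ (N * ε^α) * |q t| :=
              mul_le_mul_of_nonneg_right (h5.trans h7) (abs_nonneg _)
    have hIq : (∫ t, |q t|) = ε⁻¹ * Cρ := by
      have i1 : (∫ t, |q t|) = ∫ s, |fderiv ℝ ρε s v| := by
        rw [hq]
        exact hSUB (fun s => |fderiv ℝ ρε s v|) x
      have i2 : (∫ s, |fderiv ℝ ρε s v|) = (ε^2)⁻¹ * ε⁻¹ * ∫ s, |fderiv ℝ ρ (ε⁻¹ • s) v| := by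
        have : ∀ s : E2, |fderiv ℝ ρε s v| =
            ((ε^2)⁻¹ * ε⁻¹) * |fderiv ℝ ρ (ε⁻¹ • s) v| := by
          intro s
          rw [hDρεv s, abs_mul, abs_mul]
          rw [abs_of_pos (by positivity : (0:ℝ) < (ε^2)⁻¹), abs_of_pos (by positivity : (0:ℝ) < ε⁻¹)]
          ring
        simp only [this]
        rw [integral_const_mul]
      have i3 : (∫ s, |fderiv ℝ ρ (ε⁻¹ • s) v|) = ε^2 * Cρ := by
        rw [hCOV (fun s => |fderiv ℝ ρ (ε⁻¹ • s) v|)]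
        have : ∀ z : E2, |fderiv ℝ ρ (ε⁻¹ • ε • z) v| = |fderiv ℝ ρ z v| := by
          intro z; rw [smul_smul, inv_mul_cancel₀ hε.ne', one_smul]
        simp only [this, hCρ]
      rw [i1, i2, i3]
      field_simp
    have happx : |(ft ⋆[L.precompR E2, volume] fderiv ℝ ρε) x v|
        = |∫ t, ft t * q t| := by simp only [happly x, hq]
    calc |(ft ⋆[L.precompR E2, volume] fderiv ℝ ρε) x v|
        = |∫ t, (ft t - f x) * q t| := by rw [happx, hsplit]
      _ ≤ ∫ t, (N * ε^α) * |q t| := by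
          rw [← Real.norm_eq_abs]
          exact norm_integral_le_of_norm_le ((hqint.abs).const_mul (N * ε^α))
            (Filter.Eventually.of_forall hpt)
      _ = (N * ε^α) * (ε⁻¹ * Cρ) := by rw [integral_const_mul, hIq]
      _ = Cρ * N * ε^α * ε⁻¹ := by ring
  -- generic integral bound against the mollifier
  have hbase : ∀ (u : E2 → ℝ) (C : ℝ), 0 ≤ C → AEStronglyMeasurable u volume →
      (∀ z : E2, ρ z ≠ 0 → |u z| ≤ C) →
      Integrable (fun z => ρ z * u z) ∧ |∫ z, ρ z * u z| ≤ C := by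
    intro u C hC hum hu
    have hptb : ∀ z : E2, ‖ρ z * u z‖ ≤ C * ρ z := by
      intro z
      by_cases hz : ρ z = 0
      · simp [hz]
      · rw [Real.norm_eq_abs, abs_mul, abs_of_nonneg (hρ_nonneg z)]
        calc ρ z * |u z| ≤ ρ z * C := mul_le_mul_of_nonneg_left (hu z hz) (hρ_nonneg z)
          _ = C * ρ z := mul_comm _ _
    have hint : Integrable (fun z => ρ z * u z) := by
      apply Integrable.mono' (hρint.const_mul C)
        (hρcont.aestronglyMeasurable.mul hum)
      filter_upwards with z using hptb z
    refine ⟨hint, ?_⟩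
    rw [← Real.norm_eq_abs]
    calc ‖∫ z, ρ z * u z‖ ≤ ∫ z, C * ρ z :=
          norm_integral_le_of_norm_le (hρint.const_mul C) (Filter.Eventually.of_forall hptb)
      _ = C * ∫ z, ρ z := integral_const_mul C ρ
      _ = C := by rw [hρ_int, mul_one]
  have hxK₀mem : ∀ x ∈ K, ∀ z : E2, ρ z ≠ 0 → x - ε • z ∈ K₀ := by
    intro x hx z hz
    apply hmem x _ z hz
    rw [Metric.infDist_zero_of_mem hx]
    linarith
  have haffc : ∀ x : E2, Continuous (fun z : E2 => x - ε • z) := fun x =>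
    continuous_const.sub (continuous_id.const_smul ε)
  have hεz : ∀ x : E2, ∀ z : E2, ρ z ≠ 0 → ‖x - ε • z - x‖ ≤ ε := by
    intro x z hz
    have h3 : ‖z‖ < 1 := by simpa using hρ_supp (subset_tsupport ρ hz)
    have : x - ε • z - x = -(ε • z) := by abel
    rw [this, norm_neg, norm_smul, Real.norm_eq_abs, abs_of_pos hε]
    exact mul_le_of_le_one_right hε.le h3.le
  -- mollify bounds
  have hmol : ∀ (h : E2 → ℝ) (P : ℝ), Measurable h → 0 ≤ P →
      (∀ a ∈ K₀, |h a| ≤ P) → (∀ a ∈ K₀, ∀ b ∈ K₀, |h a - h b| ≤ P * ‖a - b‖ ^ α) →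
      ∀ x ∈ K, |h x - mollify ρ ε h x| ≤ P * ε ^ α ∧ |mollify ρ ε h x| ≤ P := by
    intro h P hhm hP h1 h2 x hx
    have hmeas : AEStronglyMeasurable (fun z : E2 => h (x - ε • z)) volume :=
      ((hhm.comp (haffc x).measurable)).aestronglyMeasurable
    have hb1 := hbase (fun z => h (x - ε • z)) P hP hmeas
      (fun z hz => h1 _ (hxK₀mem x hx z hz))
    have hdiffb := hbase (fun z => h x - h (x - ε • z)) (P * ε ^ α) (by positivity)
      (aestronglyMeasurable_const.sub hmeas) ?_
    · constructor
      · have heq : h x - mollify ρ ε h x = ∫ z, ρ z * (h x - h (x - ε • z)) := by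
          unfold mollify
          have e : (fun z : E2 => ρ z * (h x - h (x - ε • z)))
              = fun z => ρ z * h x - ρ z * h (x - ε • z) := funext fun z => by ring
          rw [e, integral_sub (hρint.mul_const _) hb1.1, integral_mul_const, hρ_int, one_mul]
        rw [heq]
        exact hdiffb.2
      · exact hb1.2
    · intro z hz
      have hxa : x ∈ K₀ := hKK₀ hx
      have hxb : x - ε • z ∈ K₀ := hxK₀mem x hx z hz
      have h5 := h2 x hxa _ hxb
      have h6 : ‖x - (x - ε • z)‖ ≤ ε := by
        rw [norm_sub_rev]
        exact hεz x z hz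
      have h7 : ‖x - (x - ε • z)‖ ^ α ≤ ε ^ α :=
        Real.rpow_le_rpow (norm_nonneg _) h6 hα0.le
      calc |h x - h (x - ε • z)| ≤ P * ‖x - (x - ε • z)‖ ^ α := h5
        _ ≤ P * ε ^ α := mul_le_mul_of_nonneg_left h7 hP
  -- rEps bound
  have hrEps : ∀ x ∈ K, |rEps ρ ε f g x| ≤ (N * ε ^ α) * (M * ε ^ α) := by
    intro x hx
    have hmf : AEStronglyMeasurable (fun z : E2 => (f (x - ε • z) - f x) * (g (x - ε • z) - g x))
        volume :=
      (((hfm.comp (haffc x).measurable).sub_const _).mul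
        ((hgm.comp (haffc x).measurable).sub_const _)).aestronglyMeasurable
    refine (hbase _ ((N * ε ^ α) * (M * ε ^ α)) (by positivity) hmf ?_).2
    intro z hz
    have hxa : x ∈ K₀ := hKK₀ hx
    have hxb : x - ε • z ∈ K₀ := hxK₀mem x hx z hz
    have h6 : ‖x - ε • z - x‖ ^ α ≤ ε ^ α :=
      Real.rpow_le_rpow (norm_nonneg _) (hεz x z hz) hα0.le
    have h7 : |f (x - ε • z) - f x| ≤ N * ε ^ α :=
      (hN2 _ hxb x hxa).trans (mul_le_mul_of_nonneg_left h6 hN0)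
    have h8 : |g (x - ε • z) - g x| ≤ M * ε ^ α :=
      (hM2 _ hxb x hxa).trans (mul_le_mul_of_nonneg_left h6 hM0)
    rw [abs_mul]
    exact mul_le_mul h7 h8 (abs_nonneg _) (by positivity)
  -- REps bound
  have hee : ε ^ α * ε ^ α = ε ^ (2*α) := by
    rw [← Real.rpow_add hε]; ring_nf
  have hREps : ∀ x ∈ K, |REps ρ ε f g x| ≤ 2 * (N * M * ε ^ (2*α)) := by
    intro x hx
    have h1 := hrEps x hx
    obtain ⟨h2, _⟩ := hmol f N hfm hN0 hN1 hN2 x hx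
    obtain ⟨h3, _⟩ := hmol g M hgm hM0 hM1 hM2 x hx
    have h4 : |(f x - mollify ρ ε f x) * (g x - mollify ρ ε g x)| ≤ (N * ε ^ α) * (M * ε ^ α) := by
      rw [abs_mul]
      exact mul_le_mul h2 h3 (abs_nonneg _) (by positivity)
    have h5 : (N * ε ^ α) * (M * ε ^ α) = N * M * ε ^ (2*α) := by rw [← hee]; ring
    have h6 := abs_sub (rEps ρ ε f g x) ((f x - mollify ρ ε f x) * (g x - mollify ρ ε g x))
    unfold REps
    linarith
  -- bound on the derivative of (mollify f) * φ on K
  have hpdK : ∀ x ∈ K, |pd 0 (fun w => mollify ρ ε f w * φ w) x|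
      ≤ Cφ * (Cρ * N * ε ^ α * ε⁻¹) + N * Cφ' := by
    intro x hx
    have hU : Metric.infDist x K < δ - ε := by
      rw [Metric.infDist_zero_of_mem hx]; linarith
    have hUopen : IsOpen {y : E2 | Metric.infDist y K < δ - ε} :=
      isOpen_lt (Metric.continuous_infDist_pt K) continuous_const
    have hdm : HasFDerivAt (mollify ρ ε f) ((ft ⋆[L.precompR E2, volume] fderiv ℝ ρε) x) x := by
      apply (hdiff x).congr_of_eventuallyEq
      filter_upwards [hUopen.mem_nhds hU] with y hy
      exact (hmolli_eq y hy).symm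
    have hφd : HasFDerivAt φ (fderiv ℝ φ x) x := (hφ.differentiable one_ne_zero x).hasFDerivAt
    have hprod := hdm.mul hφd
    have hpd : pd 0 (fun w => mollify ρ ε f w * φ w) x
        = mollify ρ ε f x * fderiv ℝ φ x v
          + φ x * ((ft ⋆[L.precompR E2, volume] fderiv ℝ ρε) x v) := by
      show fderiv ℝ (fun w => mollify ρ ε f w * φ w) x v = _
      rw [show (fun w => mollify ρ ε f w * φ w) = mollify ρ ε f * φ from rfl, hprod.fderiv]
      simp [ContinuousLinearMap.add_apply, ContinuousLinearMap.smul_apply, smul_eq_mul]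
    rw [hpd]
    obtain ⟨_, hmb⟩ := hmol f N hfm hN0 hN1 hN2 x hx
    have b1 : |mollify ρ ε f x * fderiv ℝ φ x v| ≤ N * Cφ' := by
      rw [abs_mul]
      have := hCφ' x hx
      rw [Real.norm_eq_abs] at this
      exact mul_le_mul hmb this (abs_nonneg _) hN0
    have b2 : |φ x * ((ft ⋆[L.precompR E2, volume] fderiv ℝ ρε) x v)|
        ≤ Cφ * (Cρ * N * ε ^ α * ε⁻¹) := by
      rw [abs_mul]
      have h1 := hCφ x hx
      rw [Real.norm_eq_abs] at h1
      exact mul_le_mul h1 (hDbound x hx) (abs_nonneg _) hCφ0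
    calc |mollify ρ ε f x * fderiv ℝ φ x v
          + φ x * ((ft ⋆[L.precompR E2, volume] fderiv ℝ ρε) x v)|
        ≤ |mollify ρ ε f x * fderiv ℝ φ x v|
          + |φ x * ((ft ⋆[L.precompR E2, volume] fderiv ℝ ρε) x v)| := abs_add_le _ _
      _ ≤ N * Cφ' + Cφ * (Cρ * N * ε ^ α * ε⁻¹) := by linarith
      _ = Cφ * (Cρ * N * ε ^ α * ε⁻¹) + N * Cφ' := by ring
  -- final set-integral bound
  have hfinal : |∫ z in K, REps ρ ε f g z * pd 0 (fun w => mollify ρ ε f w * φ w) z|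
      ≤ 2 * (N * M * ε ^ (2*α)) * (Cφ * (Cρ * N * ε ^ α * ε⁻¹) + N * Cφ')
        * (volume K).toReal := by
    rw [← Real.norm_eq_abs]
    apply norm_setIntegral_le_of_norm_le_const hKc.measure_lt_top
    intro x hx
    rw [Real.norm_eq_abs, abs_mul]
    exact mul_le_mul (hREps x hx) (hpdK x hx) (abs_nonneg _) (by positivity)
  have hE : ε ^ (2*α) * (ε ^ α * ε⁻¹) = ε ^ (3*α - 1) := by
    rw [show ε⁻¹ = ε ^ (-1:ℝ) by rw [Real.rpow_neg_one], ← Real.rpow_add hε,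
      ← Real.rpow_add hε]
    ring_nf
  calc |∫ z in K, REps ρ ε f g z * pd 0 (fun w => mollify ρ ε f w * φ w) z|
      ≤ 2 * (N * M * ε ^ (2*α)) * (Cφ * (Cρ * N * ε ^ α * ε⁻¹) + N * Cφ')
        * (volume K).toReal := hfinal
    _ = 2*Cφ'*(volume K).toReal * (ε ^ (2*α) * N^2 * M)
        + 2*Cρ*Cφ*(volume K).toReal * ((ε ^ (2*α) * (ε ^ α * ε⁻¹)) * N^2 * M) := by ring
    _ = 2*Cφ'*(volume K).toReal * (ε ^ (2*α) * N^2 * M)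
        + 2*Cρ*Cφ*(volume K).toReal * (ε ^ (3*α-1) * N^2 * M) := by rw [hE]

/-- The key remainder estimate:
`|∫_K R^ε(ψ_x, ψ_y) ∂_x(ψ_x^ε φ)| ≤ C (ε^{2α} ‖ψ_x‖² ‖ψ_y‖ + ε^{3α-1} ‖ψ_x‖³)`,
so that for `α > 1/3` the integral tends to `0` as `ε → 0⁺`. -/
theorem stmt11 (α : ℝ) (hα0 : 0 < α) (hα1 : α ≤ 1)
    (ρ : EuclideanSpace ℝ (Fin 2) → ℝ)
    (hρ_smooth : ContDiff ℝ (⊤ : ℕ∞) ρ) (hρ_nonneg : ∀ x, 0 ≤ ρ x)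
    (hρ_supp : tsupport ρ ⊆ Metric.ball 0 1)
    (hρ_symm : ∀ x, ρ (-x) = ρ x) (hρ_int : (∫ x, ρ x) = 1)
    (V : Set (EuclideanSpace ℝ (Fin 2))) (hV : IsOpen V)
    (ψ : EuclideanSpace ℝ (Fin 2) → ℝ)
    (hψdiff : ∀ z ∈ V, DifferentiableAt ℝ ψ z)
    (hψC1 : ContinuousOn (fun z => fderiv ℝ ψ z) V)
    (hψx : MemHolderLoc α (pd 0 ψ) V) (hψy : MemHolderLoc α (pd 1 ψ) V)
    (φ : EuclideanSpace ℝ (Fin 2) → ℝ)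
    (hφ : ContDiff ℝ 1 φ) (hφc : HasCompactSupport φ) (hφV : tsupport φ ⊆ V) :
    (∃ C : ℝ, ∀ ε : ℝ, 0 < ε → ε < sInf (Set.image2 dist (tsupport φ) Vᶜ) / 2 →
      |∫ z in tsupport φ, REps ρ ε (pd 0 ψ) (pd 1 ψ) z *
          pd 0 (fun w => mollify ρ ε (pd 0 ψ) w * φ w) z| ≤
        C * (ε ^ (2 * α) *
              (holderNorm α (pd 0 ψ)
                {y | Metric.infDist y (tsupport φ) ≤
                  sInf (Set.image2 dist (tsupport φ) Vᶜ) / 2}) ^ 2 *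
              holderNorm α (pd 1 ψ)
                {y | Metric.infDist y (tsupport φ) ≤
                  sInf (Set.image2 dist (tsupport φ) Vᶜ) / 2}
            + ε ^ (3 * α - 1) *
              (holderNorm α (pd 0 ψ)
                {y | Metric.infDist y (tsupport φ) ≤
                  sInf (Set.image2 dist (tsupport φ) Vᶜ) / 2}) ^ 3)) ∧
    (1/3 < α →
      Filter.Tendsto
        (fun ε : ℝ => ∫ z in tsupport φ, REps ρ ε (pd 0 ψ) (pd 1 ψ) z *
          pd 0 (fun w => mollify ρ ε (pd 0 ψ) w * φ w) z)
        (nhdsWithin 0 (Set.Ioi 0)) (nhds 0)) := by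
  classical
  by_cases hKne : (tsupport φ).Nonempty
  case neg =>
    have hKe : tsupport φ = ∅ := not_nonempty_iff_eq_empty.1 hKne
    have hzero : ∀ ε : ℝ, (∫ z in tsupport φ, REps ρ ε (pd 0 ψ) (pd 1 ψ) z *
        pd 0 (fun w => mollify ρ ε (pd 0 ψ) w * φ w) z) = 0 := by
      intro ε; rw [hKe]; simp
    constructor
    · refine ⟨0, fun ε hε hε' => ?_⟩
      rw [hzero ε]
      simp
    · intro _
      have heq : (fun ε : ℝ => ∫ z in tsupport φ, REps ρ ε (pd 0 ψ) (pd 1 ψ) z *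
          pd 0 (fun w => mollify ρ ε (pd 0 ψ) w * φ w) z) = fun _ => (0:ℝ) := funext hzero
      rw [heq]
      exact tendsto_const_nhds
  case pos =>
  have hKc : IsCompact (tsupport φ) := hφc
  -- existence of a positive thickening radius inside V when Vᶜ is nonempty
  have hdistV : Vᶜ.Nonempty →
      0 < sInf (Set.image2 dist (tsupport φ) Vᶜ) / 2 ∧
      {y : E2 | Metric.infDist y (tsupport φ) ≤
        sInf (Set.image2 dist (tsupport φ) Vᶜ) / 2} ⊆ V := by
    intro hVne
    obtain ⟨r, hr, hrsub⟩ := hKc.exists_thickening_subset_open hV hφV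
    have hlb : ∀ p ∈ Set.image2 dist (tsupport φ) Vᶜ, r ≤ p := by
      rintro p ⟨x, hx, y, hy, rfl⟩
      by_contra hlt
      push_neg at hlt
      have : y ∈ Metric.thickening r (tsupport φ) := by
        rw [Metric.mem_thickening_iff]
        exact ⟨x, hx, by rwa [dist_comm]⟩
      exact hy (hrsub this)
    have hne : (Set.image2 dist (tsupport φ) Vᶜ).Nonempty := .image2 hKne hVne
    have hrle : r ≤ sInf (Set.image2 dist (tsupport φ) Vᶜ) := le_csInf hne hlb
    have hpos : 0 < sInf (Set.image2 dist (tsupport φ) Vᶜ) / 2 := by linarith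
    refine ⟨hpos, ?_⟩
    intro y hy
    by_contra hyV
    obtain ⟨x, hxK, hxd⟩ := hKc.exists_infDist_eq_dist hKne y
    have h1 : dist x y ∈ Set.image2 dist (tsupport φ) Vᶜ := ⟨x, hxK, y, hyV, rfl⟩
    have h2 : sInf (Set.image2 dist (tsupport φ) Vᶜ) ≤ dist x y :=
      csInf_le ⟨0, fun p ⟨a, _, b, _, hp⟩ => hp ▸ dist_nonneg⟩ h1
    have h3 : Metric.infDist y (tsupport φ) ≤ sInf (Set.image2 dist (tsupport φ) Vᶜ) / 2 := hy
    rw [hxd] at h3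
    rw [dist_comm] at h2
    linarith
  constructor
  · -- the quantitative estimate
    by_cases hVne : Vᶜ.Nonempty
    · obtain ⟨hpos, hsub⟩ := hdistV hVne
      obtain ⟨D₁, D₂, hD₁, hD₂, hN0, hM0, hbound⟩ :=
        keyEstimate α hα0 ρ hρ_smooth hρ_nonneg hρ_supp hρ_int V ψ hψx hψy φ hφ hφc hKne
          (sInf (Set.image2 dist (tsupport φ) Vᶜ) / 2) hpos hsub
      set N := holderNorm α (pd 0 ψ)
        {y : E2 | Metric.infDist y (tsupport φ) ≤
          sInf (Set.image2 dist (tsupport φ) Vᶜ) / 2} with hNd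
      set M := holderNorm α (pd 1 ψ)
        {y : E2 | Metric.infDist y (tsupport φ) ≤
          sInf (Set.image2 dist (tsupport φ) Vᶜ) / 2} with hMd
      refine ⟨D₁ + D₂ * M / N, ?_⟩
      intro ε hε hεlt
      have hb := hbound ε hε hεlt
      have he2 : 0 ≤ ε ^ (2*α) := Real.rpow_nonneg hε.le _
      have he3 : 0 ≤ ε ^ (3*α-1) := Real.rpow_nonneg hε.le _
      by_cases hN : N = 0
      · rw [hN] at hb ⊢
        simp only [ne_eq, OfNat.ofNat_ne_zero, not_false_eq_true, zero_pow, mul_zero,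
          zero_mul, add_zero] at hb ⊢
        simpa using hb
      · have hNpos : 0 < N := lt_of_le_of_ne hN0 (Ne.symm hN)
        have hexp : (D₁ + D₂ * M / N) * (ε ^ (2*α) * N^2 * M + ε ^ (3*α-1) * N^3)
            = D₁ * (ε ^ (2*α) * N^2 * M) + D₁ * (ε ^ (3*α-1) * N^3)
              + D₂ * (ε ^ (2*α) * N * M^2) + D₂ * (ε ^ (3*α-1) * N^2 * M) := by
          field_simp
          ring
        have hp1 : 0 ≤ D₁ * (ε ^ (3*α-1) * N^3) := by positivity
        have hp2 : 0 ≤ D₂ * (ε ^ (2*α) * N * M^2) := by positivity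
        calc |∫ z in tsupport φ, REps ρ ε (pd 0 ψ) (pd 1 ψ) z *
              pd 0 (fun w => mollify ρ ε (pd 0 ψ) w * φ w) z|
            ≤ D₁ * (ε ^ (2*α) * N^2 * M) + D₂ * (ε ^ (3*α-1) * N^2 * M) := hb
          _ ≤ (D₁ + D₂ * M / N) * (ε ^ (2*α) * N^2 * M + ε ^ (3*α-1) * N^3) := by
              rw [hexp]; linarith
          _ = (D₁ + D₂ * M / N) * (ε ^ (2 * α) * N ^ 2 * M + ε ^ (3 * α - 1) * N ^ 3) := rfl
    · refine ⟨0, fun ε hε hεlt => ?_⟩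
      exfalso
      have hVc : Vᶜ = ∅ := not_nonempty_iff_eq_empty.1 hVne
      rw [hVc] at hεlt
      simp only [Set.image2_empty_right, Real.sInf_empty, zero_div] at hεlt
      linarith
  · -- the limit
    intro hα13
    obtain ⟨δ, hδ0, hsubδ⟩ : ∃ δ : ℝ, 0 < δ ∧
        {y : E2 | Metric.infDist y (tsupport φ) ≤ δ} ⊆ V := by
      by_cases hVne : Vᶜ.Nonempty
      · obtain ⟨hpos, hsub⟩ := hdistV hVne
        exact ⟨_, hpos, hsub⟩
      · refine ⟨1, one_pos, fun y _ => ?_⟩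
        have : V = univ := by
          rw [← compl_empty_iff]
          exact not_nonempty_iff_eq_empty.1 hVne
        rw [this]; trivial
    obtain ⟨D₁, D₂, hD₁, hD₂, hN0, hM0, hbound⟩ :=
      keyEstimate α hα0 ρ hρ_smooth hρ_nonneg hρ_supp hρ_int V ψ hψx hψy φ hφ hφc hKne
        δ hδ0 hsubδ
    set N := holderNorm α (pd 0 ψ) {y : E2 | Metric.infDist y (tsupport φ) ≤ δ} with hNd
    set M := holderNorm α (pd 1 ψ) {y : E2 | Metric.infDist y (tsupport φ) ≤ δ} with hMd
    have h2α : (0:ℝ) < 2*α := by linarith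
    have h3α : (0:ℝ) < 3*α - 1 := by linarith
    have hrp : ∀ p : ℝ, 0 < p → Filter.Tendsto (fun ε : ℝ => ε ^ p)
        (nhdsWithin 0 (Set.Ioi 0)) (nhds 0) := by
      intro p hp
      have h1 := (Real.continuousAt_rpow_const 0 p (Or.inr hp.le)).tendsto
      rw [Real.zero_rpow hp.ne'] at h1
      exact h1.mono_left nhdsWithin_le_nhds
    have hg : Filter.Tendsto
        (fun ε : ℝ => D₁ * (ε ^ (2*α) * N^2 * M) + D₂ * (ε ^ (3*α-1) * N^2 * M))
        (nhdsWithin 0 (Set.Ioi 0)) (nhds 0) := by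
      have t1 := (((hrp _ h2α).mul_const (N^2)).mul_const M).const_mul D₁
      have t2 := (((hrp _ h3α).mul_const (N^2)).mul_const M).const_mul D₂
      simpa using t1.add t2
    apply squeeze_zero_norm' ?_ hg
    filter_upwards [Ioo_mem_nhdsGT_of_mem (Set.left_mem_Ico.2 hδ0)] with ε hεm
    rw [Real.norm_eq_abs]
    exact hbound ε hεm.1 hεm.2
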